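/- Let S be a positively graded Noetherian commutative ring and M a finitely generated graded S-module with finite *length. Then the *length of M equals the ordinary (ungraded) length of M as an S-module. -/

import Mathlib

open DirectSum

section
variable {A M : Type*} [CommRing A] [AddCommGroup M] [Module A M]

/-- A submodule of a graded module is graded if it is stable under taking homogeneous
components. -/
def IsGradedSubmodule (ℳ : ℤ → AddSubgroup M) [DirectSum.Decomposition ℳ]
    (N : Submodule A M) : Prop :=
  ∀ (i : ℤ) (m : M), m ∈ N → (DirectSum.decompose ℳ m i : M) ∈ N

/-- A *composition series of length `n` for a graded module. -/
def IsStarCompositionSeries (ℳ : ℤ → AddSubgroup M) [DirectSum.Decomposition ℳ]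
    {n : ℕ} (c : Fin (n + 1) → Submodule A M) : Prop :=
  StrictMono c ∧ c 0 = ⊥ ∧ c (Fin.last n) = ⊤ ∧ (∀ i, IsGradedSubmodule ℳ (c i)) ∧
    ∀ i : Fin n, ∀ N : Submodule A M, IsGradedSubmodule ℳ N →
      c i.castSucc ≤ N → N ≤ c i.succ → N = c i.castSucc ∨ N = c i.succ

section helpers

variable (𝒜 : ℤ → AddSubgroup A) [GradedRing 𝒜]

/-- Homogeneous component of a scalar multiple of a homogeneous element. -/
lemma decompose_smul_of_mem (ℳ : ℤ → AddSubgroup M) [DirectSum.Decomposition ℳ]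
    [SetLike.GradedSMul 𝒜 ℳ] (r : A) {m : M} {e : ℤ} (hm : m ∈ ℳ e) (j : ℤ) :
    (DirectSum.decompose ℳ (r • m) j : M) = (DirectSum.decompose 𝒜 r (j - e) : A) • m := by
  classical
  conv_lhs => rw [← DirectSum.sum_support_decompose 𝒜 r, Finset.sum_smul,
    DirectSum.decompose_sum]
  rw [DFinsupp.finset_sum_apply, AddSubmonoidClass.coe_finset_sum]
  have hterm : ∀ k : ℤ, ((DirectSum.decompose 𝒜 r k : A) • m) ∈ ℳ (k + e) := fun k =>
    SetLike.GradedSMul.smul_mem (SetLike.coe_mem (DirectSum.decompose 𝒜 r k)) hm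
  by_cases hje : j - e ∈ (DirectSum.decompose 𝒜 r).support
  · rw [Finset.sum_eq_single_of_mem (j - e) hje]
    · have h : ((DirectSum.decompose 𝒜 r (j - e) : A) • m) ∈ ℳ j := by
        have := hterm (j - e)
        have he : j - e + e = j := by omega
        rwa [he] at this
      rw [DirectSum.decompose_of_mem_same ℳ h]
    · intro k _ hk
      rw [DirectSum.decompose_of_mem_ne ℳ (hterm k) (by omega)]
  · rw [Finset.sum_eq_zero, show (DirectSum.decompose 𝒜 r (j - e) : A) = 0 by
      rw [DFinsupp.notMem_support_iff.mp hje]; rfl, zero_smul]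
    intro k hk
    exact DirectSum.decompose_of_mem_ne ℳ (hterm k)
      (by have : k ≠ j - e := fun h => hje (h ▸ hk); omega)

/-- `P ⊔ K • t` is a graded submodule when `P` is graded, `t` homogeneous and `K` a
homogeneous ideal. -/
lemma isGradedSubmodule_sup_map (ℳ : ℤ → AddSubgroup M) [DirectSum.Decomposition ℳ]
    [SetLike.GradedSMul 𝒜 ℳ] {P : Submodule A M} (hP : IsGradedSubmodule ℳ P)
    {t : M} {e : ℤ} (ht : t ∈ ℳ e) {K : Ideal A} (hK : K.IsHomogeneous 𝒜) :
    IsGradedSubmodule ℳ (P ⊔ Submodule.map (LinearMap.toSpanSingleton A M t) K) := by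
  intro j m hm
  rw [Submodule.mem_sup] at hm
  obtain ⟨p, hp, q, hq, rfl⟩ := hm
  rw [Submodule.mem_map] at hq
  obtain ⟨s, hs, rfl⟩ := hq
  rw [LinearMap.toSpanSingleton_apply]
  have hadd : (DirectSum.decompose ℳ (p + s • t) j : M)
      = (DirectSum.decompose ℳ p j : M) + (DirectSum.decompose ℳ (s • t) j : M) := by
    rw [DirectSum.decompose_add]; rfl
  rw [hadd, decompose_smul_of_mem 𝒜 ℳ s ht j]
  refine Submodule.add_mem _ (Submodule.mem_sup_left (hP j p hp)) (Submodule.mem_sup_right ?_)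
  exact Submodule.mem_map.mpr ⟨_, hK _ hs, by rw [LinearMap.toSpanSingleton_apply]⟩

/-- Every element of the ideal generated by positive degree elements has vanishing
components in nonpositive degrees, when the grading is positive. -/
lemma span_pos_decompose (hpos : ∀ i : ℤ, i < 0 → ∀ a ∈ 𝒜 i, a = 0) {s : A}
    (hs : s ∈ Ideal.span {a : A | ∃ i : ℤ, 0 < i ∧ a ∈ 𝒜 i}) :
    ∀ j ≤ 0, (DirectSum.decompose 𝒜 s j : A) = 0 := by
  classical
  induction hs using Submodule.span_induction with
  | mem a ha =>
    obtain ⟨i, hi, hai⟩ := ha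
    intro j hj
    rw [DirectSum.decompose_of_mem_ne 𝒜 hai (by omega)]
  | zero => intro j hj; simp
  | add x y _ _ hx hy =>
    intro j hj
    have hadd : (DirectSum.decompose 𝒜 (x + y) j : A)
        = (DirectSum.decompose 𝒜 x j : A) + (DirectSum.decompose 𝒜 y j : A) := by
      rw [DirectSum.decompose_add]; rfl
    rw [hadd, hx j hj, hy j hj, add_zero]
  | smul r x _ ihx =>
    intro j hj
    have hrx : r • x = ∑ k ∈ (DirectSum.decompose 𝒜 r).support,
        x • (DirectSum.decompose 𝒜 r k : A) := by
      conv_lhs => rw [smul_eq_mul, ← DirectSum.sum_support_decompose 𝒜 r, Finset.sum_mul]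
      exact Finset.sum_congr rfl fun k _ => by rw [smul_eq_mul]; ring
    rw [hrx, DirectSum.decompose_sum, DFinsupp.finset_sum_apply,
      AddSubmonoidClass.coe_finset_sum]
    refine Finset.sum_eq_zero fun k _ => ?_
    rw [decompose_smul_of_mem 𝒜 𝒜 x (SetLike.coe_mem (DirectSum.decompose 𝒜 r k)) j]
    rcases lt_or_ge k 0 with h | h
    · rw [hpos k h _ (SetLike.coe_mem _), smul_zero]
    · rw [ihx (j - k) (by omega), zero_smul]

end helpers

/-- **Length equals *length for positively graded rings.** If `S` is a positively graded
Noetherian ring and `M` is a finitely generated graded `S`-module with a *composition series of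
length `n`, then `M` has an ordinary composition series of length `n` (each step being a
covering in the lattice of all submodules), i.e. `ℓ_S(M) = *ℓ_S(M) = n`. -/
theorem stmt_5 (𝒜 : ℤ → AddSubgroup A) [GradedRing 𝒜] [IsNoetherianRing A]
    (hpos : ∀ i : ℤ, i < 0 → ∀ a ∈ 𝒜 i, a = 0)
    (ℳ : ℤ → AddSubgroup M) [DirectSum.Decomposition ℳ] [SetLike.GradedSMul 𝒜 ℳ]
    [Module.Finite A M]
    (n : ℕ) (c : Fin (n + 1) → Submodule A M) (hc : IsStarCompositionSeries ℳ c) :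
    ∃ d : Fin (n + 1) → Submodule A M, d 0 = ⊥ ∧ d (Fin.last n) = ⊤ ∧
      ∀ i : Fin n, d i.castSucc ⋖ d i.succ := by
  classical
  obtain ⟨hmono, h0, hlast, hgr, hmax⟩ := hc
  refine ⟨c, h0, hlast, fun i => ?_⟩
  set P : Submodule A M := c i.castSucc with hPdef
  set T : Submodule A M := c i.succ with hTdef
  have hPT : P < T := hmono (Fin.castSucc_lt_succ : i.castSucc < i.succ)
  have hPg : IsGradedSubmodule ℳ P := hgr i.castSucc
  have hTg : IsGradedSubmodule ℳ T := hgr i.succ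
  -- a homogeneous element of `T` not in `P`
  obtain ⟨x, hxT, hxP⟩ := SetLike.exists_of_lt hPT
  have hexists : ∃ d : ℤ, (DirectSum.decompose ℳ x d : M) ∉ P := by
    by_contra h
    push_neg at h
    exact hxP (by
      rw [← DirectSum.sum_support_decompose ℳ x]
      exact Submodule.sum_mem _ fun j _ => h j)
  obtain ⟨d, htP⟩ := hexists
  set t : M := (DirectSum.decompose ℳ x d : M) with htdef
  have htM : t ∈ ℳ d := SetLike.coe_mem _
  have htT : t ∈ T := hTg d x hxT
  have htop : (⊤ : Ideal A).IsHomogeneous 𝒜 := fun _ _ _ => Submodule.mem_top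
  -- span of one homogeneous element over P
  have hspan_graded : ∀ u : M, u ∈ ℳ d →
      IsGradedSubmodule ℳ (P ⊔ Submodule.map (LinearMap.toSpanSingleton A M u) (⊤ : Ideal A)) :=
    fun u hu => isGradedSubmodule_sup_map 𝒜 ℳ hPg hu htop
  have hmem_map_top : ∀ u : M,
      u ∈ Submodule.map (LinearMap.toSpanSingleton A M u) (⊤ : Ideal A) :=
    fun u => Submodule.mem_map.mpr ⟨1, Submodule.mem_top, one_smul A u⟩
  have hle_of_mem : ∀ u : M, u ∈ T →
      P ⊔ Submodule.map (LinearMap.toSpanSingleton A M u) (⊤ : Ideal A) ≤ T := by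
    intro u hu
    refine sup_le hPT.le ?_
    rintro q hq
    rw [Submodule.mem_map] at hq
    obtain ⟨s, _, rfl⟩ := hq
    rw [LinearMap.toSpanSingleton_apply]
    exact T.smul_mem s hu
  have hsup_eq_T : ∀ u : M, u ∈ ℳ d → u ∈ T → u ∉ P →
      P ⊔ Submodule.map (LinearMap.toSpanSingleton A M u) (⊤ : Ideal A) = T := by
    intro u hu huT huP
    rcases hmax i _ (hspan_graded u hu) le_sup_left (hle_of_mem u huT) with h | h
    · exfalso
      apply huP
      rw [hPdef]
      exact h ▸ Submodule.mem_sup_right (hmem_map_top u)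
    · exact h.trans hTdef.symm
  have hT_eq : P ⊔ Submodule.map (LinearMap.toSpanSingleton A M t) (⊤ : Ideal A) = T :=
    hsup_eq_T t htM htT htP
  -- positive degree multiples of t land in P
  set K : Ideal A := Ideal.span {a : A | ∃ i : ℤ, 0 < i ∧ a ∈ 𝒜 i} with hKdef
  have hK : K.IsHomogeneous 𝒜 :=
    Ideal.homogeneous_span 𝒜 _ (fun a ha => by obtain ⟨i, _, hai⟩ := ha; exact ⟨i, hai⟩)
  have hN2 : P ⊔ Submodule.map (LinearMap.toSpanSingleton A M t) K = P := by
    rcases hmax i _ (isGradedSubmodule_sup_map 𝒜 ℳ hPg htM hK) le_sup_left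
        (le_trans (sup_le_sup_left (Submodule.map_mono le_top) P) (le_of_eq hT_eq)) with h | h
    · exact h.trans hPdef.symm
    · exfalso
      have htN2 : t ∈ P ⊔ Submodule.map (LinearMap.toSpanSingleton A M t) K := by
        rw [h, ← hTdef]; exact htT
      rw [Submodule.mem_sup] at htN2
      obtain ⟨p, hp, q, hq, heq⟩ := htN2
      rw [Submodule.mem_map] at hq
      obtain ⟨s, hs, rfl⟩ := hq
      rw [LinearMap.toSpanSingleton_apply] at heq
      -- take degree d component
      have hcomp : t = (DirectSum.decompose ℳ p d : M)
          + (DirectSum.decompose ℳ (s • t) d : M) := by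
        conv_lhs => rw [← DirectSum.decompose_of_mem_same ℳ htM, ← heq]
        rw [DirectSum.decompose_add]; rfl
      rw [decompose_smul_of_mem 𝒜 ℳ s htM d, sub_self,
        span_pos_decompose 𝒜 hpos hs 0 le_rfl, zero_smul, add_zero] at hcomp
      exact htP (hcomp ▸ hPg d p hp)
  have hKt_mem : ∀ s ∈ K, s • t ∈ P := by
    intro s hs
    have hmem : s • t ∈ Submodule.map (LinearMap.toSpanSingleton A M t) K :=
      Submodule.mem_map.mpr ⟨s, hs, LinearMap.toSpanSingleton_apply A M t s⟩
    exact hN2 ▸ Submodule.mem_sup_right hmem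
  -- Claim A : components of elements of T in degree ≠ d lie in P
  have claimA : ∀ u ∈ T, ∀ j : ℤ, j ≠ d → (DirectSum.decompose ℳ u j : M) ∈ P := by
    intro u huT j hj
    have hu' : u ∈ P ⊔ Submodule.map (LinearMap.toSpanSingleton A M t) (⊤ : Ideal A) :=
      hT_eq ▸ huT
    rw [Submodule.mem_sup] at hu'
    obtain ⟨p, hp, q, hq, rfl⟩ := hu'
    rw [Submodule.mem_map] at hq
    obtain ⟨s, _, rfl⟩ := hq
    rw [LinearMap.toSpanSingleton_apply]
    have hcomp : (DirectSum.decompose ℳ (p + s • t) j : M)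
        = (DirectSum.decompose ℳ p j : M) + (DirectSum.decompose ℳ (s • t) j : M) := by
      rw [DirectSum.decompose_add]; rfl
    rw [hcomp, decompose_smul_of_mem 𝒜 ℳ s htM j]
    refine Submodule.add_mem _ (hPg j p hp) ?_
    rcases lt_trichotomy j d with h | h | h
    · rw [hpos (j - d) (by omega) _ (SetLike.coe_mem _), zero_smul]
      exact P.zero_mem
    · exact absurd h hj
    · exact hKt_mem _ (Ideal.subset_span ⟨j - d, by omega, SetLike.coe_mem _⟩)
  -- Now the covering property
  refine ⟨hPT, fun N hPN hNT => ?_⟩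
  obtain ⟨y, hyN, hyP⟩ := SetLike.exists_of_lt hPN
  have hyT : y ∈ T := hNT.le hyN
  -- the degree d component of y
  set yd : M := (DirectSum.decompose ℳ y d : M) with hyddef
  have hsub : y - yd ∈ P := by
    set S : M := ∑ j ∈ (DirectSum.decompose ℳ y).support.erase d,
        (DirectSum.decompose ℳ y j : M) with hSdef
    have hSP : S ∈ P :=
      Submodule.sum_mem _ fun j hj => claimA y hyT j (Finset.ne_of_mem_erase hj)
    by_cases hd : d ∈ (DirectSum.decompose ℳ y).support
    · have h2 : yd + S = y := by
        rw [hSdef, hyddef]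
        exact (Finset.add_sum_erase _ (fun j => ((DirectSum.decompose ℳ y j : M))) hd).trans
          (DirectSum.sum_support_decompose ℳ y)
      have h3 : y - yd = S := by rw [← h2]; abel
      rw [h3]; exact hSP
    · have h0 : yd = 0 := by
        rw [hyddef, DFinsupp.notMem_support_iff.mp hd]; rfl
      have h2 : S = y := by
        rw [hSdef, Finset.erase_eq_of_notMem hd]
        exact DirectSum.sum_support_decompose ℳ y
      rw [h0, sub_zero, ← h2]; exact hSP
  have hydN : yd ∈ N := by
    have h1 : yd = y - (y - yd) := by abel
    rw [h1]
    exact Submodule.sub_mem _ hyN (hPN.le hsub)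
  have hydP : yd ∉ P := fun h => hyP (by
    have h1 : y = (y - yd) + yd := by abel
    rw [h1]; exact Submodule.add_mem _ hsub h)
  have hydM : yd ∈ ℳ d := SetLike.coe_mem _
  have hydT : yd ∈ T := hTg d y hyT
  have hTy : P ⊔ Submodule.map (LinearMap.toSpanSingleton A M yd) (⊤ : Ideal A) = T :=
    hsup_eq_T yd hydM hydT hydP
  have hTN : T ≤ N := by
    rw [← hTy]
    refine sup_le hPN.le ?_
    rintro q hq
    rw [Submodule.mem_map] at hq
    obtain ⟨s, _, rfl⟩ := hq
    rw [LinearMap.toSpanSingleton_apply]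
    exact N.smul_mem s hydN
  exact absurd hTN hNT.2
end
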